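/- Let X and Y be separable metric spaces, k_x and k_y bounded continuous symmetric positive semidefinite kernels on X and Y respectively, and k_xy the product kernel k_xy((x,y),(x',y')) := k_x(x,x')·k_y(y,y'). Then for all finite signed Borel measures P, P̂ on X and Q, Q̂ on Y: √(E_{k_xy}(P̂ ⊗ Q̂ − P ⊗ Q)) ≤ √(E_{k_x}(P))·√(E_{k_y}(Q̂ − Q)) + √(E_{k_y}(Q))·√(E_{k_x}(P̂ − P)) + √(E_{k_x}(P̂ − P))·√(E_{k_y}(Q̂ − Q)). -/

import Mathlib

open MeasureTheory Filter Topology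

/-- Integral of a real-valued function against a finite signed measure,
defined via the Jordan decomposition. -/
noncomputable def sintegral {X : Type*} [MeasurableSpace X]
    (ν : SignedMeasure X) (g : X → ℝ) : ℝ :=
  (∫ x, g x ∂ν.toJordanDecomposition.posPart) -
    (∫ x, g x ∂ν.toJordanDecomposition.negPart)

/-- The kernel energy `E_k(ν) = ∬ k(x,x') dν(x) dν(x')` of a finite signed measure. -/
noncomputable def energy {X : Type*} [MeasurableSpace X]
    (k : X × X → ℝ) (ν : SignedMeasure X) : ℝ :=
  sintegral ν fun x => sintegral ν fun y => k (x, y)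

/-- The product `μ ⊗ ν` of two finite signed measures, defined via the Jordan
decompositions: `(μ⁺⊗ν⁺ + μ⁻⊗ν⁻) − (μ⁺⊗ν⁻ + μ⁻⊗ν⁺)`. -/
noncomputable def sprod {X Y : Type*} [MeasurableSpace X] [MeasurableSpace Y]
    (μ : SignedMeasure X) (ν : SignedMeasure Y) : SignedMeasure (X × Y) :=
  ((μ.toJordanDecomposition.posPart.prod ν.toJordanDecomposition.posPart).toSignedMeasure +
      (μ.toJordanDecomposition.negPart.prod ν.toJordanDecomposition.negPart).toSignedMeasure) -
    ((μ.toJordanDecomposition.posPart.prod ν.toJordanDecomposition.negPart).toSignedMeasure +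
      (μ.toJordanDecomposition.negPart.prod ν.toJordanDecomposition.posPart).toSignedMeasure)

section AuxLemmas

namespace EAux

variable {X : Type*} [MeasurableSpace X]

lemma integrable_of_bdd {μ : Measure X} [IsFiniteMeasure μ] {g : X → ℝ} {C : ℝ}
    (hg : Measurable g) (hb : ∀ x, |g x| ≤ C) : Integrable g μ :=
  (integrable_const C).mono' hg.aestronglyMeasurable
    (Eventually.of_forall fun x => by simpa [Real.norm_eq_abs] using hb x)

lemma self_repr (s : SignedMeasure X) :
    s = s.toJordanDecomposition.posPart.toSignedMeasure -
        s.toJordanDecomposition.negPart.toSignedMeasure := by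
  conv_lhs => rw [← s.toSignedMeasure_toJordanDecomposition]
  rfl

lemma sintegral_repr {s : SignedMeasure X} {A B : Measure X} [IsFiniteMeasure A]
    [IsFiniteMeasure B] (h : s = A.toSignedMeasure - B.toSignedMeasure)
    {g : X → ℝ} {C : ℝ} (hg : Measurable g) (hb : ∀ x, |g x| ≤ C) :
    sintegral s g = (∫ x, g x ∂A) - ∫ x, g x ∂B := by
  have h2 := (self_repr s).symm.trans h
  have key : s.toJordanDecomposition.posPart + B = A + s.toJordanDecomposition.negPart := by
    rw [← Measure.toSignedMeasure_eq_toSignedMeasure_iff, Measure.toSignedMeasure_add,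
      Measure.toSignedMeasure_add]
    rw [sub_eq_sub_iff_add_eq_add] at h2
    exact h2
  have hi := congrArg (fun μ : Measure X => ∫ x, g x ∂μ) key
  simp only [integral_add_measure (integrable_of_bdd hg hb) (integrable_of_bdd hg hb)] at hi
  simp only [sintegral]
  linarith

lemma sintegral_add (s t : SignedMeasure X) {g : X → ℝ} {C : ℝ}
    (hg : Measurable g) (hb : ∀ x, |g x| ≤ C) :
    sintegral (s + t) g = sintegral s g + sintegral t g := by
  have h : s + t = (s.toJordanDecomposition.posPart + t.toJordanDecomposition.posPart).toSignedMeasure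
      - (s.toJordanDecomposition.negPart + t.toJordanDecomposition.negPart).toSignedMeasure := by
    rw [Measure.toSignedMeasure_add, Measure.toSignedMeasure_add]
    conv_lhs => rw [self_repr s, self_repr t]
    abel
  rw [sintegral_repr h hg hb,
    integral_add_measure (integrable_of_bdd hg hb) (integrable_of_bdd hg hb),
    integral_add_measure (integrable_of_bdd hg hb) (integrable_of_bdd hg hb)]
  simp only [sintegral]; ring

lemma sintegral_neg (s : SignedMeasure X) {g : X → ℝ} {C : ℝ}
    (hg : Measurable g) (hb : ∀ x, |g x| ≤ C) :
    sintegral (-s) g = - sintegral s g := by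
  have h : -s = s.toJordanDecomposition.negPart.toSignedMeasure -
      s.toJordanDecomposition.posPart.toSignedMeasure := by
    conv_lhs => rw [self_repr s]
    abel
  rw [sintegral_repr h hg hb]
  simp only [sintegral]; ring

lemma sintegral_smul (r : ℝ) (s : SignedMeasure X) {g : X → ℝ} {C : ℝ}
    (hg : Measurable g) (hb : ∀ x, |g x| ≤ C) :
    sintegral (r • s) g = r * sintegral s g := by
  have main : ∀ r : ℝ, 0 ≤ r → ∀ s : SignedMeasure X,
      sintegral (r • s) g = r * sintegral s g := by
    intro r hr s
    have h : r • s = (r.toNNReal • s.toJordanDecomposition.posPart).toSignedMeasure -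
        (r.toNNReal • s.toJordanDecomposition.negPart).toSignedMeasure := by
      rw [Measure.toSignedMeasure_smul, Measure.toSignedMeasure_smul]
      conv_lhs => rw [self_repr s]
      rw [smul_sub]
      congr 1 <;>
      · ext i hi
        simp only [VectorMeasure.smul_apply, Measure.toSignedMeasure_apply, hi, if_true,
          Measure.smul_apply, smul_eq_mul, ENNReal.toReal_mul, ENNReal.coe_toReal,
          Real.coe_toNNReal r hr, NNReal.smul_def]
    rw [sintegral_repr h hg hb]
    have hsm : ∀ μ : Measure X, ∫ x, g x ∂(r.toNNReal • μ) = r * ∫ x, g x ∂μ := by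
      intro μ
      rw [integral_smul_nnreal_measure, NNReal.smul_def, smul_eq_mul, Real.coe_toNNReal r hr]
    rw [hsm, hsm]
    simp only [sintegral]; ring
  rcases le_or_gt 0 r with hr | hr
  · exact main r hr s
  · have : r • s = -((-r) • s) := by ext i hi; simp
    rw [this, sintegral_neg _ hg hb, main (-r) (by linarith) s]
    ring

end EAux

namespace EAux2
open EAux

variable {X Y : Type*} [MeasurableSpace X] [MeasurableSpace Y]

noncomputable def benergy (k : X × X → ℝ) (s t : SignedMeasure X) : ℝ :=
  sintegral s fun x => sintegral t fun y => k (x, y)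

lemma sintegral_sub (s t : SignedMeasure X) {g : X → ℝ} {C : ℝ}
    (hg : Measurable g) (hb : ∀ x, |g x| ≤ C) :
    sintegral (s - t) g = sintegral s g - sintegral t g := by
  rw [sub_eq_add_neg, sintegral_add _ _ hg hb, sintegral_neg _ hg hb, sub_eq_add_neg]

lemma sintegral_fun_add (s : SignedMeasure X) {g h : X → ℝ} {C D : ℝ}
    (hg : Measurable g) (hbg : ∀ x, |g x| ≤ C) (hh : Measurable h) (hbh : ∀ x, |h x| ≤ D) :
    sintegral s (fun x => g x + h x) = sintegral s g + sintegral s h := by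
  simp only [sintegral,
    integral_add (integrable_of_bdd hg hbg) (integrable_of_bdd hh hbh)]
  ring

variable {k : X × X → ℝ} {M : ℝ} (hk : Measurable k) (hM : ∀ p, |k p| ≤ M)

section
include hk hM

lemma slice_meas (x : X) : Measurable fun y => k (x, y) :=
  hk.comp measurable_prodMk_left

lemma inner_meas (t : SignedMeasure X) :
    Measurable fun x => sintegral t fun y => k (x, y) := by
  simp only [sintegral]
  exact ((hk.stronglyMeasurable.integral_prod_right').measurable.sub
    (hk.stronglyMeasurable.integral_prod_right').measurable)

lemma inner_bdd (t : SignedMeasure X) :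
    ∀ x, |sintegral t fun y => k (x, y)| ≤
      M * (t.toJordanDecomposition.posPart Set.univ).toReal +
        M * (t.toJordanDecomposition.negPart Set.univ).toReal := by
  intro x
  simp only [sintegral]
  have h1 : ∀ (μ : Measure X) [IsFiniteMeasure μ],
      |∫ y, k (x, y) ∂μ| ≤ M * (μ Set.univ).toReal := by
    intro μ _
    rw [← Real.norm_eq_abs]
    exact norm_integral_le_of_norm_le_const
      (Eventually.of_forall fun y => by simpa [Real.norm_eq_abs] using hM (x, y))
  calc |(∫ y, k (x, y) ∂t.toJordanDecomposition.posPart) -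
        ∫ y, k (x, y) ∂t.toJordanDecomposition.negPart|
      ≤ |∫ y, k (x, y) ∂t.toJordanDecomposition.posPart| +
        |∫ y, k (x, y) ∂t.toJordanDecomposition.negPart| := abs_sub _ _
    _ ≤ _ := add_le_add (h1 _) (h1 _)

lemma benergy_add_left (s s' t : SignedMeasure X) :
    benergy k (s + s') t = benergy k s t + benergy k s' t :=
  sintegral_add s s' (inner_meas hk hM t) (inner_bdd hk hM t)

lemma benergy_smul_left (r : ℝ) (s t : SignedMeasure X) :
    benergy k (r • s) t = r * benergy k s t :=
  sintegral_smul r s (inner_meas hk hM t) (inner_bdd hk hM t)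

lemma benergy_sub_left (s s' t : SignedMeasure X) :
    benergy k (s - s') t = benergy k s t - benergy k s' t :=
  sintegral_sub s s' (inner_meas hk hM t) (inner_bdd hk hM t)

lemma benergy_add_right (s t t' : SignedMeasure X) :
    benergy k s (t + t') = benergy k s t + benergy k s t' := by
  unfold benergy
  have : (fun x => sintegral (t + t') fun y => k (x, y)) =
      fun x => (sintegral t fun y => k (x, y)) + sintegral t' fun y => k (x, y) := by
    funext x
    exact sintegral_add t t' (slice_meas hk hM x) (fun y => hM (x, y))
  rw [this]
  exact sintegral_fun_add s (inner_meas hk hM t) (inner_bdd hk hM t)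
    (inner_meas hk hM t') (inner_bdd hk hM t')

lemma benergy_smul_right (r : ℝ) (s t : SignedMeasure X) :
    benergy k s (r • t) = r * benergy k s t := by
  unfold benergy
  have : (fun x => sintegral (r • t) fun y => k (x, y)) =
      fun x => r * sintegral t fun y => k (x, y) := by
    funext x
    exact sintegral_smul r t (slice_meas hk hM x) (fun y => hM (x, y))
  rw [this]
  simp only [sintegral, integral_const_mul]
  ring

lemma benergy_sub_right (s t t' : SignedMeasure X) :
    benergy k s (t - t') = benergy k s t - benergy k s t' := by
  unfold benergy
  have : (fun x => sintegral (t - t') fun y => k (x, y)) =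
      fun x => (sintegral t fun y => k (x, y)) - sintegral t' fun y => k (x, y) := by
    funext x
    exact sintegral_sub t t' (slice_meas hk hM x) (fun y => hM (x, y))
  rw [this]
  simp only [sub_eq_add_neg]
  rw [sintegral_fun_add s (inner_meas hk hM t) (inner_bdd hk hM t)
    (measurable_neg_iff.mpr (inner_meas hk hM t'))
    (fun x => by simpa [abs_neg] using inner_bdd hk hM t' x)]
  congr 1
  simp only [sintegral, integral_neg]
  ring

lemma double_int_swap (α β : Measure X) [IsFiniteMeasure α] [IsFiniteMeasure β]
    (hsymm : ∀ a b, k (a, b) = k (b, a)) :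
    ∫ x, ∫ y, k (x, y) ∂β ∂α = ∫ x, ∫ y, k (x, y) ∂α ∂β := by
  have hint : Integrable (Function.uncurry fun x y => k (x, y)) (α.prod β) := by
    have : (Function.uncurry fun x y => k (x, y)) = k := rfl
    rw [this]
    exact integrable_of_bdd hk hM
  have := integral_integral_swap hint
  rw [this]
  congr 1
  funext y
  congr 1
  funext x
  exact hsymm x y

lemma benergy_symm (hsymm : ∀ a b, k (a, b) = k (b, a)) (s t : SignedMeasure X) :
    benergy k s t = benergy k t s := by
  have expand : ∀ u v : SignedMeasure X, benergy k u v =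
      ((∫ x, ∫ y, k (x, y) ∂v.toJordanDecomposition.posPart ∂u.toJordanDecomposition.posPart) -
        ∫ x, ∫ y, k (x, y) ∂v.toJordanDecomposition.negPart ∂u.toJordanDecomposition.posPart) -
      ((∫ x, ∫ y, k (x, y) ∂v.toJordanDecomposition.posPart ∂u.toJordanDecomposition.negPart) -
        ∫ x, ∫ y, k (x, y) ∂v.toJordanDecomposition.negPart ∂u.toJordanDecomposition.negPart) := by
    intro u v
    have hmeas : ∀ (μ : Measure X) [IsFiniteMeasure μ],
        Measurable fun x => ∫ y, k (x, y) ∂μ := fun μ _ =>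
      (hk.stronglyMeasurable.integral_prod_right').measurable
    have hbdd : ∀ (μ : Measure X) [IsFiniteMeasure μ],
        ∀ x, |∫ y, k (x, y) ∂μ| ≤ M * (μ Set.univ).toReal := by
      intro μ _ x
      rw [← Real.norm_eq_abs]
      exact norm_integral_le_of_norm_le_const
        (Eventually.of_forall fun y => by simpa [Real.norm_eq_abs] using hM (x, y))
    unfold benergy
    simp only [sintegral]
    rw [integral_sub (integrable_of_bdd (hmeas _) (hbdd _)) (integrable_of_bdd (hmeas _) (hbdd _)),
      integral_sub (integrable_of_bdd (hmeas _) (hbdd _)) (integrable_of_bdd (hmeas _) (hbdd _))]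
  rw [expand s t, expand t s]
  have h1 := double_int_swap hk hM s.toJordanDecomposition.posPart t.toJordanDecomposition.posPart hsymm
  have h2 := double_int_swap hk hM s.toJordanDecomposition.posPart t.toJordanDecomposition.negPart hsymm
  have h3 := double_int_swap hk hM s.toJordanDecomposition.negPart t.toJordanDecomposition.posPart hsymm
  have h4 := double_int_swap hk hM s.toJordanDecomposition.negPart t.toJordanDecomposition.negPart hsymm
  linarith

lemma benergy_cs (hsymm : ∀ a b, k (a, b) = k (b, a))
    (hE : ∀ v : SignedMeasure X, 0 ≤ benergy k v v) (s t : SignedMeasure X) :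
    |benergy k s t| ≤ Real.sqrt (benergy k s s) * Real.sqrt (benergy k t t) := by
  set B := benergy k s t with hB
  have expand : ∀ r : ℝ, benergy k (s + r • t) (s + r • t) =
      benergy k s s + 2 * r * B + r ^ 2 * benergy k t t := by
    intro r
    rw [benergy_add_left hk hM, benergy_add_right hk hM, benergy_add_right hk hM,
      benergy_smul_left hk hM, benergy_smul_right hk hM, benergy_smul_right hk hM,
      benergy_smul_left hk hM, benergy_symm hk hM hsymm t s]
    ring
  have hq : ∀ r : ℝ, 0 ≤ benergy k t t * (r * r) + (2 * B) * r + benergy k s s := by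
    intro r
    have := hE (s + r • t)
    rw [expand r] at this
    nlinarith [this]
  have hd := discrim_le_zero hq
  rw [discrim] at hd
  have hBsq : B ^ 2 ≤ benergy k s s * benergy k t t := by nlinarith [hd]
  calc |B| = Real.sqrt (B ^ 2) := (Real.sqrt_sq_eq_abs B).symm
    _ ≤ Real.sqrt (benergy k s s * benergy k t t) := Real.sqrt_le_sqrt hBsq
    _ = _ := Real.sqrt_mul (hE s) _

end

end EAux2

namespace EAux3
open EAux EAux2

variable {X Y : Type*} [MeasurableSpace X] [MeasurableSpace Y]

lemma sintegral_sprod (s : SignedMeasure X) (t : SignedMeasure Y)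
    {F : X → ℝ} {G : Y → ℝ} {CF CG : ℝ}
    (hF : Measurable F) (hbF : ∀ x, |F x| ≤ CF) (hG : Measurable G) (hbG : ∀ y, |G y| ≤ CG) :
    sintegral (sprod s t) (fun p => F p.1 * G p.2) = sintegral s F * sintegral t G := by
  set sp := s.toJordanDecomposition.posPart
  set sn := s.toJordanDecomposition.negPart
  set tp := t.toJordanDecomposition.posPart
  set tn := t.toJordanDecomposition.negPart
  have h : sprod s t = (sp.prod tp + sn.prod tn).toSignedMeasure -
      (sp.prod tn + sn.prod tp).toSignedMeasure := by
    rw [Measure.toSignedMeasure_add, Measure.toSignedMeasure_add]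
    rfl
  have hmeas : Measurable fun p : X × Y => F p.1 * G p.2 :=
    (hF.comp measurable_fst).mul (hG.comp measurable_snd)
  have hbdd : ∀ p : X × Y, |F p.1 * G p.2| ≤ CF * CG := by
    intro p
    rw [abs_mul]
    exact mul_le_mul (hbF p.1) (hbG p.2) (abs_nonneg _)
      (le_trans (abs_nonneg _) (hbF p.1))
  rw [sintegral_repr h hmeas hbdd,
    integral_add_measure (integrable_of_bdd hmeas hbdd) (integrable_of_bdd hmeas hbdd),
    integral_add_measure (integrable_of_bdd hmeas hbdd) (integrable_of_bdd hmeas hbdd)]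
  have hp : ∀ (α : Measure X) (β : Measure Y) [IsFiniteMeasure α] [IsFiniteMeasure β],
      ∫ p : X × Y, F p.1 * G p.2 ∂α.prod β = (∫ x, F x ∂α) * ∫ y, G y ∂β := by
    intro α β _ _
    exact integral_prod_mul F G
  rw [hp sp tp, hp sn tn, hp sp tn, hp sn tp]
  simp only [sintegral]
  ring

end EAux3

namespace EAux4
open EAux

variable {X : Type*}

lemma tsum_psd [Nonempty X] (k : X × X → ℝ) {M : ℝ} (hM : ∀ p, |k p| ≤ M)
    (hpsd : ∀ (m : ℕ) (x : Fin m → X) (c : Fin m → ℝ),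
      0 ≤ ∑ i, ∑ j, c i * c j * k (x i, x j))
    (u : ℕ → X) (c : ℕ → ℝ) (hc : Summable fun m => |c m|) :
    0 ≤ ∑' l, c l * ∑' m, c m * k (u l, u m) := by
  have hM0 : 0 ≤ M := le_trans (abs_nonneg _) (hM (u 0, u 0))
  set f : ℕ × ℕ → ℝ := fun p => c p.1 * c p.2 * k (u p.1, u p.2) with hf
  have hbnd : ∀ p : ℕ × ℕ, ‖f p‖ ≤ |c p.1| * |c p.2| * M := by
    intro p
    rw [Real.norm_eq_abs, hf, abs_mul, abs_mul]
    exact mul_le_mul_of_nonneg_left (hM _) (by positivity)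
  have hsum : Summable f :=
    Summable.of_norm_bounded
      ((hc.mul_of_nonneg hc (fun _ => abs_nonneg _) (fun _ => abs_nonneg _)).mul_right M) hbnd
  have hfib : ∀ l, Summable fun m => f (l, m) := by
    intro l
    apply Summable.of_norm_bounded
      (((hc.mul_left |c l|).mul_right M)) (fun m => hbnd (l, m))
  have hrow : ∀ l, c l * ∑' m, c m * k (u l, u m) = ∑' m, f (l, m) := by
    intro l
    rw [← tsum_mul_left]
    apply tsum_congr
    intro m
    rw [hf]; ring
  have h1 : ∑' l, c l * ∑' m, c m * k (u l, u m) = ∑' p : ℕ × ℕ, f p := by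
    rw [hsum.tsum_prod' hfib]
    exact tsum_congr hrow
  rw [h1]
  have hsq : Tendsto (fun N => Finset.range N ×ˢ Finset.range N) atTop
      (atTop : Filter (Finset (ℕ × ℕ))) := by
    apply tendsto_atTop_finset_of_monotone
    · intro i j hij
      exact Finset.product_subset_product (Finset.range_subset_range.2 hij) (Finset.range_subset_range.2 hij)
    · intro p
      exact ⟨max p.1 p.2 + 1, Finset.mem_product.2
        ⟨Finset.mem_range.2 (Nat.lt_succ_of_le (le_max_left _ _)),
         Finset.mem_range.2 (Nat.lt_succ_of_le (le_max_right _ _))⟩⟩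
  have htend : Tendsto (fun N => ∑ p ∈ Finset.range N ×ˢ Finset.range N, f p) atTop
      (𝓝 (∑' p : ℕ × ℕ, f p)) := hsum.hasSum.comp hsq
  apply ge_of_tendsto' htend
  intro N
  rw [Finset.sum_product]
  have : ∑ l ∈ Finset.range N, ∑ m ∈ Finset.range N, f (l, m)
      = ∑ i : Fin N, ∑ j : Fin N, (fun i : Fin N => c i) i * (fun i : Fin N => c i) j *
          k ((fun i : Fin N => u i) i, (fun i : Fin N => u i) j) := by
    rw [← Fin.sum_univ_eq_sum_range]
    apply Finset.sum_congr rfl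
    intro i _
    rw [← Fin.sum_univ_eq_sum_range]
  rw [this]
  exact hpsd N (fun i => u i) (fun i => c i)

variable [MeasurableSpace X]

lemma integral_comp_nat (φ : X → ℕ) (hφ : Measurable φ)
    (β : Measure X) [IsFiniteMeasure β] (H : ℕ → ℝ) {C : ℝ} (hb : ∀ m, |H m| ≤ C) :
    ∫ y, H (φ y) ∂β = ∑' m, (β (φ ⁻¹' {m})).toReal * H m := by
  have hfin : IsFiniteMeasure (Measure.map φ β) := Measure.isFiniteMeasure_map β φ
  rw [← integral_map hφ.aemeasurable measurable_from_top.aestronglyMeasurable,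
    integral_countable' (integrable_of_bdd measurable_from_top hb)]
  apply tsum_congr
  intro m
  rw [map_measureReal_apply hφ (measurableSet_singleton m), smul_eq_mul, measureReal_def]

lemma summable_fiber (φ : X → ℕ) (hφ : Measurable φ) (β : Measure X) [IsFiniteMeasure β] :
    Summable fun m => (β (φ ⁻¹' {m})).toReal := by
  apply ENNReal.summable_toReal
  rw [← measure_iUnion (pairwise_disjoint_fiber φ)
    (fun m => hφ (measurableSet_singleton m))]
  exact measure_ne_top β _

lemma double_discrete (k : X × X → ℝ) {M : ℝ}
    (hM : ∀ p, |k p| ≤ M) (u : ℕ → X) (φ : X → ℕ) (hφ : Measurable φ)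
    (α β : Measure X) [IsFiniteMeasure α] [IsFiniteMeasure β] :
    ∫ x, ∫ y, k (u (φ x), u (φ y)) ∂β ∂α
      = ∑' l, (α (φ ⁻¹' {l})).toReal * ∑' m, (β (φ ⁻¹' {m})).toReal * k (u l, u m) := by
  have hM0 : 0 ≤ M := le_trans (abs_nonneg _) (hM (u 0, u 0))
  set b : ℕ → ℝ := fun m => (β (φ ⁻¹' {m})).toReal with hbdef
  have hb0 : ∀ m, 0 ≤ b m := fun m => ENNReal.toReal_nonneg
  have hsb : Summable b := summable_fiber φ hφ β
  have inner : ∀ x, ∫ y, k (u (φ x), u (φ y)) ∂β = ∑' m, b m * k (u (φ x), u m) := fun x =>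
    integral_comp_nat φ hφ β (fun m => k (u (φ x), u m)) (fun m => hM _)
  have hGbd : ∀ l, |∑' m, b m * k (u l, u m)| ≤ (∑' m, b m) * M := by
    intro l
    have h1 : ∀ m, ‖b m * k (u l, u m)‖ ≤ b m * M := by
      intro m
      rw [Real.norm_eq_abs, abs_mul, abs_of_nonneg (hb0 m)]
      exact mul_le_mul_of_nonneg_left (hM _) (hb0 m)
    have hsn : Summable fun m => ‖b m * k (u l, u m)‖ :=
      Summable.of_nonneg_of_le (fun m => norm_nonneg _) h1 (hsb.mul_right M)
    calc |∑' m, b m * k (u l, u m)| ≤ ∑' m, ‖b m * k (u l, u m)‖ := by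
          rw [← Real.norm_eq_abs]; exact norm_tsum_le_tsum_norm hsn
      _ ≤ ∑' m, b m * M := Summable.tsum_le_tsum h1 hsn (hsb.mul_right M)
      _ = (∑' m, b m) * M := tsum_mul_right
  calc ∫ x, ∫ y, k (u (φ x), u (φ y)) ∂β ∂α
      = ∫ x, (fun l => ∑' m, b m * k (u l, u m)) (φ x) ∂α :=
        integral_congr_ae (Eventually.of_forall inner)
    _ = ∑' l, (α (φ ⁻¹' {l})).toReal * ∑' m, b m * k (u l, u m) :=
        integral_comp_nat φ hφ α _ hGbd

end EAux4

namespace EAux5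
open EAux EAux4

variable {X : Type*}

lemma tsum_combo [Nonempty X] (k : X × X → ℝ) {M : ℝ} (hM : ∀ p, |k p| ≤ M)
    (hpsd : ∀ (m : ℕ) (x : Fin m → X) (c : Fin m → ℝ),
      0 ≤ ∑ i, ∑ j, c i * c j * k (x i, x j))
    (u : ℕ → X) (a b : ℕ → ℝ) (ha0 : ∀ m, 0 ≤ a m) (hb0 : ∀ m, 0 ≤ b m)
    (hsa : Summable a) (hsb : Summable b) :
    0 ≤ ((∑' l, a l * ∑' m, a m * k (u l, u m)) - (∑' l, a l * ∑' m, b m * k (u l, u m)))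
      - ((∑' l, b l * ∑' m, a m * k (u l, u m)) - (∑' l, b l * ∑' m, b m * k (u l, u m))) := by
  have hM0 : 0 ≤ M := le_trans (abs_nonneg _) (hM (u 0, u 0))
  set c : ℕ → ℝ := fun m => a m - b m with hcdef
  have hca : Summable fun m => |c m| :=
    Summable.of_nonneg_of_le (fun m => abs_nonneg _) (fun m => (abs_sub _ _).trans
      (by rw [abs_of_nonneg (ha0 m), abs_of_nonneg (hb0 m)])) (hsa.add hsb)
  have haab : Summable fun m => |a m| := by simpa [abs_of_nonneg (ha0 _)] using hsa
  have hbab : Summable fun m => |b m| := by simpa [abs_of_nonneg (hb0 _)] using hsb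
  -- row summability
  have hrow : ∀ (w : ℕ → ℝ), (Summable fun m => |w m|) → ∀ l,
      Summable fun m => w m * k (u l, u m) := by
    intro w hw l
    apply Summable.of_norm_bounded (hw.mul_right M)
    intro m
    rw [Real.norm_eq_abs, abs_mul]
    exact mul_le_mul_of_nonneg_left (hM _) (abs_nonneg _)
  have habs : ∀ (w : ℕ → ℝ), (Summable fun m => |w m|) → ∀ l,
      |∑' m, w m * k (u l, u m)| ≤ (∑' m, |w m|) * M := by
    intro w hw l
    have h1 : ∀ m, ‖w m * k (u l, u m)‖ ≤ |w m| * M := by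
      intro m
      rw [Real.norm_eq_abs, abs_mul]
      exact mul_le_mul_of_nonneg_left (hM _) (abs_nonneg _)
    have hsn : Summable fun m => ‖w m * k (u l, u m)‖ :=
      Summable.of_nonneg_of_le (fun m => norm_nonneg _) h1 (hw.mul_right M)
    calc |∑' m, w m * k (u l, u m)| ≤ ∑' m, ‖w m * k (u l, u m)‖ := by
          rw [← Real.norm_eq_abs]; exact norm_tsum_le_tsum_norm hsn
      _ ≤ ∑' m, |w m| * M := Summable.tsum_le_tsum h1 hsn (hw.mul_right M)
      _ = _ := tsum_mul_right
  have hstep1 : ∀ l, ∑' m, c m * k (u l, u m)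
      = (∑' m, a m * k (u l, u m)) - ∑' m, b m * k (u l, u m) := by
    intro l
    rw [← Summable.tsum_sub (hrow a haab l) (hrow b hbab l)]
    apply tsum_congr
    intro m
    rw [hcdef]; ring
  -- column summability for w l * (row of w')
  have hcol : ∀ (w w' : ℕ → ℝ), (Summable fun m => |w m|) → (Summable fun m => |w' m|) →
      Summable fun l => w l * ∑' m, w' m * k (u l, u m) := by
    intro w w' hw hw'
    apply Summable.of_norm_bounded
      (hw.mul_right ((∑' m, |w' m|) * M))
    intro l
    rw [Real.norm_eq_abs, abs_mul]
    exact mul_le_mul_of_nonneg_left (habs w' hw' l) (abs_nonneg _)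
  have hstep2 : ∑' l, c l * ∑' m, c m * k (u l, u m)
      = ((∑' l, a l * ∑' m, a m * k (u l, u m)) - (∑' l, a l * ∑' m, b m * k (u l, u m)))
        - ((∑' l, b l * ∑' m, a m * k (u l, u m))
            - (∑' l, b l * ∑' m, b m * k (u l, u m))) := by
    have hpt : ∀ l, c l * ∑' m, c m * k (u l, u m)
        = ((a l * ∑' m, a m * k (u l, u m)) - (a l * ∑' m, b m * k (u l, u m)))
          - ((b l * ∑' m, a m * k (u l, u m)) - (b l * ∑' m, b m * k (u l, u m))) := by
      intro l
      rw [hstep1 l, hcdef]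
      ring
    calc ∑' l, c l * ∑' m, c m * k (u l, u m)
        = ∑' l, (((a l * ∑' m, a m * k (u l, u m)) - (a l * ∑' m, b m * k (u l, u m)))
            - ((b l * ∑' m, a m * k (u l, u m)) - (b l * ∑' m, b m * k (u l, u m)))) :=
          tsum_congr hpt
      _ = _ := by
          rw [Summable.tsum_sub (((hcol a a haab haab).sub (hcol a b haab hbab)))
              (((hcol b a hbab haab).sub (hcol b b hbab hbab))),
            Summable.tsum_sub (hcol a a haab haab) (hcol a b haab hbab),
            Summable.tsum_sub (hcol b a hbab haab) (hcol b b hbab hbab)]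
  rw [← hstep2]
  exact tsum_psd k hM hpsd u c hca

end EAux5

namespace EAux6
open EAux EAux4 EAux5

lemma double_tendsto {X : Type*} [MeasurableSpace X] [MetricSpace X]
    [TopologicalSpace.SeparableSpace X] [BorelSpace X]
    (k : X × X → ℝ) {M : ℝ} (hM : ∀ p, |k p| ≤ M) (hk : Continuous k)
    (T : ℕ → X → X) (hT : ∀ n, Measurable (T n))
    (hTt : ∀ x, Tendsto (fun n => T n x) atTop (𝓝 x))
    (α β : Measure X) [IsFiniteMeasure α] [IsFiniteMeasure β] :
    Tendsto (fun n => ∫ x, ∫ y, k (T n x, T n y) ∂β ∂α) atTop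
      (𝓝 (∫ x, ∫ y, k (x, y) ∂β ∂α)) := by
  have : SecondCountableTopology X := UniformSpace.secondCountable_of_separable X
  apply tendsto_integral_of_dominated_convergence (fun _ => M * (β Set.univ).toReal)
  · intro n
    have hm : Measurable fun p : X × X => k (T n p.1, T n p.2) :=
      hk.measurable.comp (((hT n).comp measurable_fst).prodMk ((hT n).comp measurable_snd))
    exact hm.stronglyMeasurable.integral_prod_right'.aestronglyMeasurable
  · exact integrable_const _
  · intro n
    apply Eventually.of_forall
    intro x
    exact norm_integral_le_of_norm_le_const
      (Eventually.of_forall fun y => by simpa [Real.norm_eq_abs] using hM (T n x, T n y))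
  · apply Eventually.of_forall
    intro x
    apply tendsto_integral_of_dominated_convergence (fun _ => M)
    · intro n
      exact (hk.measurable.comp (measurable_const.prodMk (hT n))).aestronglyMeasurable
    · exact integrable_const _
    · intro n
      exact Eventually.of_forall fun y => by simpa [Real.norm_eq_abs] using hM (T n x, T n y)
    · apply Eventually.of_forall
      intro y
      exact (hk.tendsto (x, y)).comp ((hTt x).prodMk_nhds (hTt y))

end EAux6

namespace EAux7
open EAux EAux4 EAux5 EAux6

lemma energy_nonneg {X : Type*} [MetricSpace X] [TopologicalSpace.SeparableSpace X]
    [MeasurableSpace X] [BorelSpace X]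
    (k : X × X → ℝ) {M : ℝ} (hM : ∀ p, |k p| ≤ M) (hk : Continuous k)
    (hpsd : ∀ (m : ℕ) (x : Fin m → X) (c : Fin m → ℝ),
      0 ≤ ∑ i, ∑ j, c i * c j * k (x i, x j))
    (s : SignedMeasure X) : 0 ≤ energy k s := by
  rcases isEmpty_or_nonempty X with h | h
  · have hzero : ∀ μ : Measure X, μ = 0 := fun μ => by
      ext t _
      rw [Set.eq_empty_of_isEmpty t]
      simp
    rw [energy, sintegral, hzero s.toJordanDecomposition.posPart,
      hzero s.toJordanDecomposition.negPart]
    simp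
  · obtain ⟨u, hu⟩ := TopologicalSpace.exists_dense_seq X
    have hex : ∀ (n : ℕ) (x : X), ∃ m, dist x (u m) < 1 / ((n : ℝ) + 1) := fun n x =>
      Metric.denseRange_iff.mp hu x _ (by positivity)
    set idx : ℕ → X → ℕ := fun n x => Nat.find (hex n x) with hidx
    have hidx_meas : ∀ n, Measurable (idx n) := by
      intro n
      apply measurable_to_countable'
      intro m
      have hset : idx n ⁻¹' {m} =
          Metric.ball (u m) (1 / ((n : ℝ) + 1)) ∩
            ⋂ l ∈ Finset.range m, (Metric.ball (u l) (1 / ((n : ℝ) + 1)))ᶜ := by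
        ext x
        simp only [Set.mem_preimage, Set.mem_singleton_iff, hidx, Nat.find_eq_iff (hex n x),
          Set.mem_inter_iff, Metric.mem_ball, Set.mem_iInter, Set.mem_compl_iff,
          Finset.mem_range]
      rw [hset]
      exact measurableSet_ball.inter
        (MeasurableSet.biInter (Finset.range m).countable_toSet
          fun l _ => measurableSet_ball.compl)
    set T : ℕ → X → X := fun n x => u (idx n x) with hT
    have hT_meas : ∀ n, Measurable (T n) := fun n => measurable_from_top.comp (hidx_meas n)
    have hT_tend : ∀ x, Tendsto (fun n => T n x) atTop (𝓝 x) := by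
      intro x
      rw [tendsto_iff_dist_tendsto_zero]
      apply tendsto_of_tendsto_of_tendsto_of_le_of_le tendsto_const_nhds
        tendsto_one_div_add_atTop_nhds_zero_nat (fun n => dist_nonneg)
      intro n
      show dist (T n x) x ≤ 1 / ((n : ℝ) + 1)
      rw [dist_comm]
      exact le_of_lt (Nat.find_spec (hex n x))
    have hsc : SecondCountableTopology X := UniformSpace.secondCountable_of_separable X
    set μp := s.toJordanDecomposition.posPart with hμp
    set μn := s.toJordanDecomposition.negPart with hμn
    have hmeas_int : ∀ (β : Measure X) [IsFiniteMeasure β],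
        Measurable fun x => ∫ y, k (x, y) ∂β := fun β _ =>
      hk.measurable.stronglyMeasurable.integral_prod_right'.measurable
    have hbdd_int : ∀ (β : Measure X) [IsFiniteMeasure β],
        ∀ x, |∫ y, k (x, y) ∂β| ≤ M * (β Set.univ).toReal := by
      intro β _ x
      rw [← Real.norm_eq_abs]
      exact norm_integral_le_of_norm_le_const
        (Eventually.of_forall fun y => by simpa [Real.norm_eq_abs] using hM (x, y))
    have hrepr : energy k s =
        ((∫ x, ∫ y, k (x, y) ∂μp ∂μp) - ∫ x, ∫ y, k (x, y) ∂μn ∂μp) -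
          ((∫ x, ∫ y, k (x, y) ∂μp ∂μn) - ∫ x, ∫ y, k (x, y) ∂μn ∂μn) := by
      rw [energy]
      simp only [sintegral]
      rw [integral_sub (integrable_of_bdd (hmeas_int μp) (hbdd_int μp))
          (integrable_of_bdd (hmeas_int μn) (hbdd_int μn)),
        integral_sub (integrable_of_bdd (hmeas_int μp) (hbdd_int μp))
          (integrable_of_bdd (hmeas_int μn) (hbdd_int μn))]
    have hpos : ∀ n, 0 ≤
        ((∫ x, ∫ y, k (T n x, T n y) ∂μp ∂μp) - ∫ x, ∫ y, k (T n x, T n y) ∂μn ∂μp)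
        - ((∫ x, ∫ y, k (T n x, T n y) ∂μp ∂μn)
            - ∫ x, ∫ y, k (T n x, T n y) ∂μn ∂μn) := by
      intro n
      have e11 := double_discrete k hM u (idx n) (hidx_meas n) μp μp
      have e12 := double_discrete k hM u (idx n) (hidx_meas n) μp μn
      have e21 := double_discrete k hM u (idx n) (hidx_meas n) μn μp
      have e22 := double_discrete k hM u (idx n) (hidx_meas n) μn μn
      simp only [hT]
      rw [e11, e12, e21, e22]
      exact tsum_combo k hM hpsd u
        (fun l => (μp (idx n ⁻¹' {l})).toReal) (fun l => (μn (idx n ⁻¹' {l})).toReal)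
        (fun m => ENNReal.toReal_nonneg) (fun m => ENNReal.toReal_nonneg)
        (summable_fiber (idx n) (hidx_meas n) μp) (summable_fiber (idx n) (hidx_meas n) μn)
    have key : Tendsto (fun n =>
        ((∫ x, ∫ y, k (T n x, T n y) ∂μp ∂μp) - ∫ x, ∫ y, k (T n x, T n y) ∂μn ∂μp)
        - ((∫ x, ∫ y, k (T n x, T n y) ∂μp ∂μn)
            - ∫ x, ∫ y, k (T n x, T n y) ∂μn ∂μn)) atTop (𝓝 (energy k s)) := by
      rw [hrepr]
      exact ((double_tendsto k hM hk T hT_meas hT_tend μp μp).sub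
          (double_tendsto k hM hk T hT_meas hT_tend μp μn)).sub
        ((double_tendsto k hM hk T hT_meas hT_tend μn μp).sub
          (double_tendsto k hM hk T hT_meas hT_tend μn μn))
    exact ge_of_tendsto' key hpos

end EAux7

namespace EAux8
open EAux EAux2 EAux3

variable {X Y : Type*} [MeasurableSpace X] [MeasurableSpace Y]

lemma benergy_sprod (kx : X × X → ℝ) (ky : Y × Y → ℝ) {Mx My : ℝ}
    (hkx : Measurable kx) (hMx : ∀ p, |kx p| ≤ Mx)
    (hky : Measurable ky) (hMy : ∀ p, |ky p| ≤ My)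
    (s s' : SignedMeasure X) (t t' : SignedMeasure Y) :
    benergy (fun p : (X × Y) × (X × Y) => kx (p.1.1, p.2.1) * ky (p.1.2, p.2.2))
        (sprod s t) (sprod s' t')
      = benergy kx s s' * benergy ky t t' := by
  have inner : ∀ p : X × Y,
      (sintegral (sprod s' t') fun q => kx (p.1, q.1) * ky (p.2, q.2))
        = (sintegral s' fun x' => kx (p.1, x')) * sintegral t' fun y' => ky (p.2, y') := by
    intro p
    exact sintegral_sprod s' t' (hkx.comp measurable_prodMk_left) (fun x' => hMx _)
      (hky.comp measurable_prodMk_left) fun y' => hMy _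
  have h0 : benergy (fun p : (X × Y) × (X × Y) => kx (p.1.1, p.2.1) * ky (p.1.2, p.2.2))
      (sprod s t) (sprod s' t') = sintegral (sprod s t)
        (fun p : X × Y => sintegral (sprod s' t') fun q => kx (p.1, q.1) * ky (p.2, q.2)) := rfl
  rw [h0]
  simp only [inner]
  exact sintegral_sprod s t (inner_meas hkx hMx s') (inner_bdd hkx hMx s')
    (inner_meas hky hMy t') (inner_bdd hky hMy t')

end EAux8

end AuxLemmas

open EAux EAux2 EAux3 EAux7 EAux8 in
set_option maxHeartbeats 1000000 in
/-- Appendix B inequality (proof of Lemma 3): for tensor-product embeddings under a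
product kernel,
`‖μ̂_{(X,Y)} − μ_{(X,Y)}‖ ≤ ‖μ_X‖·‖μ̂_Y − μ_Y‖ + ‖μ_Y‖·‖μ̂_X − μ_X‖ + ‖μ̂_X − μ_X‖·‖μ̂_Y − μ_Y‖`,
stated with RKHS norms expressed as square roots of kernel energies. -/
theorem sqrt_energy_sprod_sub_sprod_le
    {X Y : Type*}
    [MetricSpace X] [TopologicalSpace.SeparableSpace X] [MeasurableSpace X] [BorelSpace X]
    [MetricSpace Y] [TopologicalSpace.SeparableSpace Y] [MeasurableSpace Y] [BorelSpace Y]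
    (kx : X × X → ℝ) (hkx_bdd : ∃ M, ∀ p, |kx p| ≤ M) (hkx_cont : Continuous kx)
    (hkx_symm : ∀ a b, kx (a, b) = kx (b, a))
    (hkx_psd : ∀ (m : ℕ) (x : Fin m → X) (c : Fin m → ℝ),
      0 ≤ ∑ i, ∑ j, c i * c j * kx (x i, x j))
    (ky : Y × Y → ℝ) (hky_bdd : ∃ M, ∀ p, |ky p| ≤ M) (hky_cont : Continuous ky)
    (hky_symm : ∀ a b, ky (a, b) = ky (b, a))
    (hky_psd : ∀ (m : ℕ) (y : Fin m → Y) (c : Fin m → ℝ),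
      0 ≤ ∑ i, ∑ j, c i * c j * ky (y i, y j))
    (P Phat : SignedMeasure X) (Q Qhat : SignedMeasure Y) :
    Real.sqrt (energy
        (fun p : (X × Y) × (X × Y) => kx (p.1.1, p.2.1) * ky (p.1.2, p.2.2))
        (sprod Phat Qhat - sprod P Q))
      ≤ Real.sqrt (energy kx P) * Real.sqrt (energy ky (Qhat - Q))
        + Real.sqrt (energy ky Q) * Real.sqrt (energy kx (Phat - P))
        + Real.sqrt (energy kx (Phat - P)) * Real.sqrt (energy ky (Qhat - Q)) := by
  have _iX : SecondCountableTopology X := UniformSpace.secondCountable_of_separable X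
  have _iY : SecondCountableTopology Y := UniformSpace.secondCountable_of_separable Y
  obtain ⟨Mx, hMx⟩ := hkx_bdd
  obtain ⟨My, hMy⟩ := hky_bdd
  have hkxm : Measurable kx := hkx_cont.measurable
  have hkym : Measurable ky := hky_cont.measurable
  have hMxy : ∀ p : (X × Y) × (X × Y),
      |kx (p.1.1, p.2.1) * ky (p.1.2, p.2.2)| ≤ Mx * My := by
    intro p
    rw [abs_mul]
    exact mul_le_mul (hMx _) (hMy _) (abs_nonneg (ky (p.1.2, p.2.2)))
      (le_trans (abs_nonneg (kx (p.1.1, p.2.1))) (hMx (p.1.1, p.2.1)))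
  have hkxym : Measurable fun p : (X × Y) × (X × Y) => kx (p.1.1, p.2.1) * ky (p.1.2, p.2.2) :=
    (hkxm.comp ((measurable_fst.fst).prodMk (measurable_snd.fst))).mul
      (hkym.comp ((measurable_fst.snd).prodMk (measurable_snd.snd)))
  have hsymxy : ∀ a b : X × Y,
      (fun p : (X × Y) × (X × Y) => kx (p.1.1, p.2.1) * ky (p.1.2, p.2.2)) (a, b) =
      (fun p : (X × Y) × (X × Y) => kx (p.1.1, p.2.1) * ky (p.1.2, p.2.2)) (b, a) := by
    intro a b
    simp only
    rw [hkx_symm, hky_symm]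
  have hEx : ∀ v : SignedMeasure X, 0 ≤ benergy kx v v := fun v =>
    energy_nonneg kx hMx hkx_cont hkx_psd v
  have hEy : ∀ v : SignedMeasure Y, 0 ≤ benergy ky v v := fun v =>
    energy_nonneg ky hMy hky_cont hky_psd v
  -- abbreviations
  set a := benergy kx P P with hadef
  set ah := benergy kx Phat Phat with hahdef
  set c := benergy kx Phat P with hcdef
  set b := benergy ky Q Q with hbdef
  set bh := benergy ky Qhat Qhat with hbhdef
  set d := benergy ky Qhat Q with hddef
  -- energy of differences
  have hEdP : energy kx (Phat - P) = ah - 2 * c + a := by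
    show benergy kx (Phat - P) (Phat - P) = _
    rw [benergy_sub_left hkxm hMx, benergy_sub_right hkxm hMx, benergy_sub_right hkxm hMx,
      benergy_symm hkxm hMx hkx_symm P Phat]
    ring
  have hEdQ : energy ky (Qhat - Q) = bh - 2 * d + b := by
    show benergy ky (Qhat - Q) (Qhat - Q) = _
    rw [benergy_sub_left hkym hMy, benergy_sub_right hkym hMy, benergy_sub_right hkym hMy,
      benergy_symm hkym hMy hky_symm Q Qhat]
    ring
  -- energy of the big difference
  have hES : energy (fun p : (X × Y) × (X × Y) => kx (p.1.1, p.2.1) * ky (p.1.2, p.2.2))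
      (sprod Phat Qhat - sprod P Q) = ah * bh - 2 * (c * d) + a * b := by
    show benergy (fun p : (X × Y) × (X × Y) => kx (p.1.1, p.2.1) * ky (p.1.2, p.2.2))
      (sprod Phat Qhat - sprod P Q) (sprod Phat Qhat - sprod P Q) = _
    rw [benergy_sub_left hkxym hMxy, benergy_sub_right hkxym hMxy, benergy_sub_right hkxym hMxy,
      benergy_sprod kx ky hkxm hMx hkym hMy, benergy_sprod kx ky hkxm hMx hkym hMy,
      benergy_sprod kx ky hkxm hMx hkym hMy, benergy_sprod kx ky hkxm hMx hkym hMy,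
      benergy_symm hkxm hMx hkx_symm P Phat, benergy_symm hkym hMy hky_symm Q Qhat]
    ring
  -- Cauchy–Schwarz bounds
  have hce : |c - a| ≤ Real.sqrt (energy kx (Phat - P)) * Real.sqrt a := by
    have h := benergy_cs hkxm hMx hkx_symm hEx (Phat - P) P
    rw [benergy_sub_left hkxm hMx] at h
    exact h
  have hdf : |d - b| ≤ Real.sqrt (energy ky (Qhat - Q)) * Real.sqrt b := by
    have h := benergy_cs hkym hMy hky_symm hEy (Qhat - Q) Q
    rw [benergy_sub_left hkym hMy] at h
    exact h
  -- numeric finale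
  set A := Real.sqrt (energy kx (Phat - P)) with hAdef
  set B := Real.sqrt (energy ky (Qhat - Q)) with hBdef
  set u := Real.sqrt a with hudef
  set v := Real.sqrt b with hvdef
  have hA0 : 0 ≤ A := Real.sqrt_nonneg _
  have hB0 : 0 ≤ B := Real.sqrt_nonneg _
  have hu0 : 0 ≤ u := Real.sqrt_nonneg _
  have hv0 : 0 ≤ v := Real.sqrt_nonneg _
  have hA2 : A ^ 2 = ah - 2 * c + a := by
    rw [hAdef, Real.sq_sqrt (show (0:ℝ) ≤ energy kx (Phat - P) from hEx (Phat - P)), hEdP]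
  have hB2 : B ^ 2 = bh - 2 * d + b := by
    rw [hBdef, Real.sq_sqrt (show (0:ℝ) ≤ energy ky (Qhat - Q) from hEy (Qhat - Q)), hEdQ]
  have hu2 : u ^ 2 = a := Real.sq_sqrt (hEx P)
  have hv2 : v ^ 2 = b := Real.sq_sqrt (hEy Q)
  have hce' : -(A * u) ≤ c - a ∧ c - a ≤ A * u := abs_le.mp hce
  have hdf' : -(B * v) ≤ d - b ∧ d - b ≤ B * v := abs_le.mp hdf
  have hkey : energy (fun p : (X × Y) × (X × Y) => kx (p.1.1, p.2.1) * ky (p.1.2, p.2.2))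
      (sprod Phat Qhat - sprod P Q) ≤ (u * B + v * A + A * B) ^ 2 := by
    rw [hES]
    have hah : ah = A ^ 2 + 2 * c - u ^ 2 := by rw [hA2, hu2]; ring
    have hbh : bh = B ^ 2 + 2 * d - v ^ 2 := by rw [hB2, hv2]; ring
    rw [hah, hbh]
    have e1 : (0:ℝ) ≤ A * u - (c - a) := by linarith [hce'.2]
    have e2 : (0:ℝ) ≤ A * u + (c - a) := by linarith [hce'.1]
    have f1 : (0:ℝ) ≤ B * v - (d - b) := by linarith [hdf'.2]
    have f2 : (0:ℝ) ≤ B * v + (d - b) := by linarith [hdf'.1]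
    nlinarith [mul_nonneg e1 f2, mul_nonneg e2 f1,
      mul_nonneg (sq_nonneg B) e1, mul_nonneg (sq_nonneg A) f1, hu2, hv2]
  calc Real.sqrt (energy (fun p : (X × Y) × (X × Y) => kx (p.1.1, p.2.1) * ky (p.1.2, p.2.2))
        (sprod Phat Qhat - sprod P Q))
      ≤ Real.sqrt ((u * B + v * A + A * B) ^ 2) := Real.sqrt_le_sqrt hkey
    _ = u * B + v * A + A * B := Real.sqrt_sq (by positivity)
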